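/- Let λ and β be positive random variables on a probability space (Ω, 𝓕, ℙ). Then there exists a positive random variable τ satisfying λ = τ (1/𝔼[e^{−τ}] − 1)^β almost surely, and such τ is unique (any two positive random variables satisfying this relation coincide almost surely). Explicitly, τ = λ x̄^β, where x̄ is the unique positive solution of the equation x (1/𝔼[e^{−λ x^β}] − 1) = 1. -/
import Mathlib

open MeasureTheory Filter Set Topology

lemma mk_integrable {Ω : Type*} [MeasurableSpace Ω] (μ : Measure Ω) [IsProbabilityMeasure μ]
    {f : Ω → ℝ} (hf : Measurable f) (h0 : ∀ ω, 0 ≤ f ω) :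
    Integrable (fun ω => Real.exp (-f ω)) μ := by
  refine (integrable_const (1:ℝ)).mono' hf.neg.exp.aestronglyMeasurable ?_
  refine Eventually.of_forall fun ω => ?_
  rw [Real.norm_eq_abs, abs_of_pos (Real.exp_pos _)]
  exact Real.exp_le_one_iff.mpr (neg_nonpos.mpr (h0 ω))

lemma mk_int_pos {Ω : Type*} [MeasurableSpace Ω] (μ : Measure Ω) [IsProbabilityMeasure μ]
    {f : Ω → ℝ} (hf : Measurable f) (h0 : ∀ ω, 0 ≤ f ω) :
    0 < ∫ ω, Real.exp (-f ω) ∂μ := by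
  refine (integral_pos_iff_support_of_nonneg (fun ω => (Real.exp_pos _).le)
    (mk_integrable μ hf h0)).2 ?_
  have : Function.support (fun ω => Real.exp (-f ω)) = Set.univ := by
    ext ω; simp [Function.mem_support, (Real.exp_pos _).ne']
  rw [this]
  simp

lemma mk_int_lt {Ω : Type*} [MeasurableSpace Ω] (μ : Measure Ω) [IsProbabilityMeasure μ]
    {f g : Ω → ℝ} (hf : Measurable f) (hg : Measurable g)
    (h0 : ∀ ω, 0 ≤ f ω) (hfg : ∀ ω, f ω < g ω) :
    ∫ ω, Real.exp (-g ω) ∂μ < ∫ ω, Real.exp (-f ω) ∂μ := by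
  have hIf := mk_integrable μ hf h0
  have hIg := mk_integrable μ hg (fun ω => (h0 ω).trans (hfg ω).le)
  have hpos : 0 < ∫ ω, (Real.exp (-f ω) - Real.exp (-g ω)) ∂μ := by
    refine (integral_pos_iff_support_of_nonneg
      (fun ω => sub_nonneg.mpr (Real.exp_le_exp.mpr (neg_le_neg (hfg ω).le)))
      (hIf.sub hIg)).2 ?_
    have : Function.support (fun ω => Real.exp (-f ω) - Real.exp (-g ω)) = Set.univ := by
      ext ω
      simp only [Function.mem_support, Set.mem_univ, iff_true]
      exact sub_ne_zero.mpr (Real.exp_lt_exp.mpr (neg_lt_neg (hfg ω))).ne'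
    rw [this]; simp
  rw [integral_sub hIf hIg] at hpos
  linarith

lemma mk_int_lt_one {Ω : Type*} [MeasurableSpace Ω] (μ : Measure Ω) [IsProbabilityMeasure μ]
    {f : Ω → ℝ} (hf : Measurable f) (h0 : ∀ ω, 0 < f ω) :
    ∫ ω, Real.exp (-f ω) ∂μ < 1 := by
  have := mk_int_lt μ measurable_const hf (fun _ => le_refl (0:ℝ)) h0
  simpa using this

theorem mixed_kies_tau_exists_unique
    {Ω : Type*} [MeasurableSpace Ω] (μ : Measure Ω) [IsProbabilityMeasure μ]
    (lam beta : Ω → ℝ) (hlam_meas : Measurable lam) (hbeta_meas : Measurable beta)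
    (hlam_pos : ∀ ω, 0 < lam ω) (hbeta_pos : ∀ ω, 0 < beta ω) :
    (∃ xbar : ℝ, 0 < xbar ∧
        xbar * (1 / (∫ ω, Real.exp (-(lam ω) * xbar ^ (beta ω)) ∂μ) - 1) = 1 ∧
        (∀ y : ℝ, 0 < y →
          y * (1 / (∫ ω, Real.exp (-(lam ω) * y ^ (beta ω)) ∂μ) - 1) = 1 → y = xbar) ∧
        (∀ᵐ ω ∂μ, lam ω =
          (lam ω * xbar ^ (beta ω)) *
            (1 / (∫ ω', Real.exp (-(lam ω' * xbar ^ (beta ω'))) ∂μ) - 1) ^ (beta ω))) ∧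
    (∀ τ₁ τ₂ : Ω → ℝ, Measurable τ₁ → Measurable τ₂ →
        (∀ ω, 0 < τ₁ ω) → (∀ ω, 0 < τ₂ ω) →
        (∀ᵐ ω ∂μ, lam ω = τ₁ ω * (1 / (∫ ω', Real.exp (-τ₁ ω') ∂μ) - 1) ^ (beta ω)) →
        (∀ᵐ ω ∂μ, lam ω = τ₂ ω * (1 / (∫ ω', Real.exp (-τ₂ ω') ∂μ) - 1) ^ (beta ω)) →
        τ₁ =ᵐ[μ] τ₂) := by
  classical
  -- basic facts about the integrand
  have hmeasI : ∀ x : ℝ, Measurable fun ω => lam ω * x ^ (beta ω) :=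
    fun x => hlam_meas.mul (measurable_const.pow hbeta_meas)
  have hposI : ∀ x : ℝ, 0 < x → ∀ ω, 0 < lam ω * x ^ (beta ω) := fun x hx ω =>
    mul_pos (hlam_pos ω) (Real.rpow_pos_of_pos hx _)
  have hmeasE : ∀ x : ℝ, Measurable fun ω => Real.exp (-(lam ω) * x ^ (beta ω)) :=
    fun x => ((hlam_meas.neg).mul (measurable_const.pow hbeta_meas)).exp
  set F : ℝ → ℝ := fun x => ∫ ω, Real.exp (-(lam ω) * x ^ (beta ω)) ∂μ with hF
  have hFx : ∀ x : ℝ, F x = ∫ ω, Real.exp (-(lam ω * x ^ (beta ω))) ∂μ := by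
    intro x; rw [hF]; simp only [neg_mul]
  have hF_pos : ∀ x : ℝ, 0 < x → 0 < F x := fun x hx => by
    rw [hFx]; exact mk_int_pos μ (hmeasI x) (fun ω => (hposI x hx ω).le)
  have hF_lt_one : ∀ x : ℝ, 0 < x → F x < 1 := fun x hx => by
    rw [hFx]; exact mk_int_lt_one μ (hmeasI x) (hposI x hx)
  have hF_anti : ∀ x y : ℝ, 0 < x → x < y → F y < F x := by
    intro x y hx hxy
    rw [hFx, hFx]
    refine mk_int_lt μ (hmeasI x) (hmeasI y) (fun ω => (hposI x hx ω).le) (fun ω => ?_)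
    exact mul_lt_mul_of_pos_left (Real.rpow_lt_rpow hx.le hxy (hbeta_pos ω)) (hlam_pos ω)
  set g : ℝ → ℝ := fun x => x * (1 / F x - 1) with hg
  have hc_pos : ∀ x : ℝ, 0 < x → 0 < 1 / F x - 1 := fun x hx =>
    sub_pos.mpr ((one_lt_div (hF_pos x hx)).mpr (hF_lt_one x hx))
  have hg_mono : ∀ x y : ℝ, 0 < x → x < y → g x < g y := by
    intro x y hx hxy
    have hy : 0 < y := hx.trans hxy
    have h1 : 1 / F x - 1 < 1 / F y - 1 :=
      sub_lt_sub_right (one_div_lt_one_div_of_lt (hF_pos y hy) (hF_anti x y hx hxy)) 1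
    calc g x = x * (1 / F x - 1) := rfl
      _ < x * (1 / F y - 1) := mul_lt_mul_of_pos_left h1 hx
      _ < y * (1 / F y - 1) := mul_lt_mul_of_pos_right hxy (hc_pos y hy)
  have huniq : ∀ x y : ℝ, 0 < x → 0 < y → g x = 1 → g y = 1 → x = y := by
    intro x y hx hy h1 h2
    rcases lt_trichotomy x y with h | h | h
    · have := hg_mono x y hx h; rw [h1, h2] at this; exact absurd this (lt_irrefl 1)
    · exact h
    · have := hg_mono y x hy h; rw [h1, h2] at this; exact absurd this (lt_irrefl 1)
  -- a point where g < 1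
  obtain ⟨x₀, hx₀pos, hgx₀⟩ : ∃ x : ℝ, 0 < x ∧ g x < 1 := by
    set C := 1 / F 1 - 1 with hC
    have hCpos : 0 < C := hc_pos 1 one_pos
    set x := min (1/2) (1 / (2 * (C + 1))) with hx
    have hxpos : 0 < x := lt_min (by norm_num) (by positivity)
    have hxlt1 : x < 1 := lt_of_le_of_lt (min_le_left _ _) (by norm_num)
    have hxle : x ≤ 1 / (2 * (C + 1)) := min_le_right _ _
    refine ⟨x, hxpos, ?_⟩
    have h1 : F 1 ≤ F x := (hF_anti x 1 hxpos hxlt1).le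
    have h2 : 1 / F x - 1 ≤ C := by
      rw [hC]
      exact sub_le_sub_right (one_div_le_one_div_of_le (hF_pos 1 one_pos) h1) 1
    have h3 : 0 ≤ 1 / F x - 1 := (hc_pos x hxpos).le
    calc g x = x * (1 / F x - 1) := rfl
      _ ≤ (1 / (2 * (C + 1))) * C := by
          exact mul_le_mul hxle h2 h3 (by positivity)
      _ < 1 := by
          rw [one_div_mul_eq_div, div_lt_one (by positivity)]
          nlinarith
  -- F tends to 0 at infinity
  have hF_tendsto : Tendsto F atTop (𝓝 0) := by
    have h0 : (0 : ℝ) = ∫ (_ : Ω), (0:ℝ) ∂μ := by simp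
    rw [hF, h0]
    refine tendsto_integral_filter_of_dominated_convergence (fun _ => (1:ℝ))
      (Eventually.of_forall fun x => (hmeasE x).aestronglyMeasurable) ?_
      (integrable_const 1) ?_
    · filter_upwards [eventually_gt_atTop (0:ℝ)] with x hx
      refine Eventually.of_forall fun ω => ?_
      rw [Real.norm_eq_abs, abs_of_pos (Real.exp_pos _)]
      refine Real.exp_le_one_iff.mpr ?_
      rw [neg_mul]
      exact neg_nonpos.mpr (hposI x hx ω).le
    · refine Eventually.of_forall fun ω => ?_
      have h1 : Tendsto (fun x : ℝ => x ^ (beta ω)) atTop atTop :=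
        tendsto_rpow_atTop (hbeta_pos ω)
      have h2 : Tendsto (fun x : ℝ => lam ω * x ^ (beta ω)) atTop atTop :=
        Tendsto.const_mul_atTop (hlam_pos ω) h1
      have h3 : Tendsto (fun x : ℝ => -(lam ω) * x ^ (beta ω)) atTop atBot := by
        simp only [neg_mul]
        exact tendsto_neg_atTop_atBot.comp h2
      exact Real.tendsto_exp_atBot.comp h3
  have hinv : Tendsto (fun x => 1 / F x) atTop atTop := by
    simp only [one_div]
    refine Tendsto.inv_tendsto_nhdsGT_zero (tendsto_nhdsWithin_iff.mpr ⟨hF_tendsto, ?_⟩)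
    filter_upwards [eventually_gt_atTop (0:ℝ)] with x hx
    exact hF_pos x hx
  have hx1ev : ∀ᶠ x in atTop, 1 < g x := by
    filter_upwards [hinv.eventually_gt_atTop 2, eventually_ge_atTop (1:ℝ)] with x h2 h1x
    show 1 < x * (1 / F x - 1)
    nlinarith
  obtain ⟨x₁, hgx₁, hx₀x₁⟩ := (hx1ev.and (eventually_gt_atTop x₀)).exists
  -- continuity
  have hFcont : ∀ x : ℝ, 0 < x → ContinuousAt F x := by
    intro x hx
    rw [hF]
    refine continuousAt_of_dominated
      (Eventually.of_forall fun y => (hmeasE y).aestronglyMeasurable) ?_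
      (integrable_const 1) ?_
    · filter_upwards [eventually_gt_nhds hx] with y hy
      refine Eventually.of_forall fun ω => ?_
      rw [Real.norm_eq_abs, abs_of_pos (Real.exp_pos _)]
      refine Real.exp_le_one_iff.mpr ?_
      rw [neg_mul]
      exact neg_nonpos.mpr (hposI y hy ω).le
    · refine Eventually.of_forall fun ω => ?_
      have h1 : ContinuousAt (fun y : ℝ => y ^ (beta ω)) x :=
        Real.continuousAt_rpow_const x _ (Or.inl hx.ne')
      exact Real.continuous_exp.continuousAt.comp (continuousAt_const.mul h1)
  have hgcont : ContinuousOn g (Icc x₀ x₁) := by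
    intro y hy
    have hy0 : 0 < y := lt_of_lt_of_le hx₀pos hy.1
    have : ContinuousAt g y := by
      rw [hg]
      exact continuousAt_id.mul
        ((continuousAt_const.div (hFcont y hy0) (hF_pos y hy0).ne').sub continuousAt_const)
    exact this.continuousWithinAt
  obtain ⟨xbar, hxbarmem, hgxbar⟩ :=
    intermediate_value_Icc hx₀x₁.le hgcont ⟨hgx₀.le, hgx₁.le⟩
  have hxbar_pos : 0 < xbar := lt_of_lt_of_le hx₀pos hxbarmem.1
  -- from a.e. representation lam = τ * c^β, deduce the root property
  have key : ∀ τ : Ω → ℝ, Measurable τ → (∀ ω, 0 < τ ω) →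
      (∀ᵐ ω ∂μ, lam ω = τ ω * (1 / (∫ ω', Real.exp (-τ ω') ∂μ) - 1) ^ (beta ω)) →
      ∃ x : ℝ, 0 < x ∧ g x = 1 ∧ (∀ᵐ ω ∂μ, τ ω = lam ω * x ^ (beta ω)) := by
    intro τ hm hp h
    have hEpos : 0 < ∫ ω', Real.exp (-τ ω') ∂μ := mk_int_pos μ hm (fun ω => (hp ω).le)
    have hElt : (∫ ω', Real.exp (-τ ω') ∂μ) < 1 := mk_int_lt_one μ hm hp
    set c : ℝ := 1 / (∫ ω', Real.exp (-τ ω') ∂μ) - 1 with hcdef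
    have hcpos : 0 < c := sub_pos.mpr ((one_lt_div hEpos).mpr hElt)
    refine ⟨1 / c, by positivity, ?_, ?_⟩
    · have hτeq : (∫ ω', Real.exp (-τ ω') ∂μ) = F (1 / c) := by
        rw [hFx]
        refine integral_congr_ae ?_
        filter_upwards [h] with ω hω
        have hωc : lam ω * (1 / c) ^ (beta ω) = τ ω := by
          rw [hω, one_div, Real.inv_rpow hcpos.le, mul_assoc,
            mul_inv_cancel₀ (Real.rpow_pos_of_pos hcpos _).ne', mul_one]
        rw [hωc]
      show (1 / c) * (1 / F (1 / c) - 1) = 1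
      rw [← hτeq, ← hcdef, one_div, inv_mul_cancel₀ hcpos.ne']
    · filter_upwards [h] with ω hω
      rw [hω, one_div, Real.inv_rpow hcpos.le, mul_assoc,
        mul_inv_cancel₀ (Real.rpow_pos_of_pos hcpos _).ne', mul_one]
  refine ⟨⟨xbar, hxbar_pos, hgxbar, ?_, ?_⟩, ?_⟩
  · intro y hy hgy
    exact huniq y xbar hy hxbar_pos hgy hgxbar
  · have hint : (∫ ω', Real.exp (-(lam ω' * xbar ^ (beta ω'))) ∂μ) = F xbar :=
      (hFx xbar).symm
    have hc : 1 / F xbar - 1 = 1 / xbar := by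
      rw [eq_div_iff hxbar_pos.ne', mul_comm]
      exact hgxbar
    refine Eventually.of_forall fun ω => ?_
    rw [hint, hc, one_div, Real.inv_rpow hxbar_pos.le, mul_assoc,
      mul_inv_cancel₀ (Real.rpow_pos_of_pos hxbar_pos _).ne', mul_one]
  · intro τ₁ τ₂ hm1 hm2 hp1 hp2 h1 h2
    obtain ⟨y₁, hy₁pos, hgy₁, hτ₁⟩ := key τ₁ hm1 hp1 h1
    obtain ⟨y₂, hy₂pos, hgy₂, hτ₂⟩ := key τ₂ hm2 hp2 h2
    have hyy : y₁ = y₂ := huniq y₁ y₂ hy₁pos hy₂pos hgy₁ hgy₂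
    filter_upwards [hτ₁, hτ₂] with ω e1 e2
    rw [e1, e2, hyy]
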